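/- Let I ⊆ ℝ be an open interval, E ∈ ℂ, let v : I → ℂ be differentiable, and let Ξ : I → ℂ be three times differentiable and nowhere vanishing on I, satisfying Ξ''' − 4(v − E)Ξ' − 2v'Ξ = 0 on I. Let Q ∈ ℂ be the constant with Ξ(x)²(E − v(x)) + (1/2)Ξ(x)Ξ''(x) − (1/4)(Ξ'(x))² = Q for all x ∈ I, and let s ∈ ℂ satisfy s² = −Q. If Λ : I → ℂ is differentiable and satisfies Λ'(x) = (Ξ'(x)/(2Ξ(x)) + s/Ξ(x)) Λ(x) on I, then Λ is twice differentiable and satisfies −Λ''(x) + (v(x) − E) Λ(x) = 0 on I. -/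

import Mathlib

open Set

theorem integral_representation_gives_eigenfunction
    (a b : ℝ) (E Q s : ℂ) (v Ξ Λ : ℝ → ℂ)
    (hv : ∀ x ∈ Ioo a b, DifferentiableAt ℝ v x)
    (hΞ : ∀ x ∈ Ioo a b, DifferentiableAt ℝ Ξ x)
    (hΞ' : ∀ x ∈ Ioo a b, DifferentiableAt ℝ (deriv Ξ) x)
    (hΞ'' : ∀ x ∈ Ioo a b, DifferentiableAt ℝ (deriv (deriv Ξ)) x)
    (hΞne : ∀ x ∈ Ioo a b, Ξ x ≠ 0)
    (heq : ∀ x ∈ Ioo a b,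
      deriv (deriv (deriv Ξ)) x - 4 * (v x - E) * deriv Ξ x - 2 * deriv v x * Ξ x = 0)
    (hQ : ∀ x ∈ Ioo a b,
      (Ξ x) ^ 2 * (E - v x) + (1 / 2) * Ξ x * deriv (deriv Ξ) x - (1 / 4) * (deriv Ξ x) ^ 2 = Q)
    (hs : s ^ 2 = -Q)
    (hΛ : ∀ x ∈ Ioo a b, DifferentiableAt ℝ Λ x)
    (hΛ' : ∀ x ∈ Ioo a b, deriv Λ x = (deriv Ξ x / (2 * Ξ x) + s / Ξ x) * Λ x) :
    (∀ x ∈ Ioo a b, DifferentiableAt ℝ (deriv Λ) x) ∧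
    (∀ x ∈ Ioo a b, -(deriv (deriv Λ) x) + (v x - E) * Λ x = 0) := by
  set g : ℝ → ℂ := fun y => (deriv Ξ y / (2 * Ξ y) + s / Ξ y) * Λ y with hg
  have hmem : ∀ x ∈ Ioo a b, Ioo a b ∈ nhds x := fun x hx =>
    isOpen_Ioo.mem_nhds hx
  have hev : ∀ x ∈ Ioo a b, deriv Λ =ᶠ[nhds x] g := by
    intro x hx
    filter_upwards [hmem x hx] with y hy using hΛ' y hy
  have hgd : ∀ x ∈ Ioo a b, HasDerivAt g
      (((deriv (deriv Ξ) x * (2 * Ξ x) - deriv Ξ x * (2 * deriv Ξ x)) / (2 * Ξ x) ^ 2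
        + (0 * Ξ x - s * deriv Ξ x) / (Ξ x) ^ 2) * Λ x
        + (deriv Ξ x / (2 * Ξ x) + s / Ξ x) * ((deriv Ξ x / (2 * Ξ x) + s / Ξ x) * Λ x)) x := by
    intro x hx
    have hne := hΞne x hx
    have h2ne : (2 : ℂ) * Ξ x ≠ 0 := by simp [hne]
    have h1 : HasDerivAt (fun y => deriv Ξ y / (2 * Ξ y))
        ((deriv (deriv Ξ) x * (2 * Ξ x) - deriv Ξ x * (2 * deriv Ξ x)) / (2 * Ξ x) ^ 2) x :=
      ((hΞ' x hx).hasDerivAt).div (((hΞ x hx).hasDerivAt).const_mul 2) h2ne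
    have h2 : HasDerivAt (fun y => s / Ξ y)
        ((0 * Ξ x - s * deriv Ξ x) / (Ξ x) ^ 2) x :=
      (hasDerivAt_const x s).div ((hΞ x hx).hasDerivAt) hne
    have h3 : HasDerivAt Λ ((deriv Ξ x / (2 * Ξ x) + s / Ξ x) * Λ x) x := by
      rw [← hΛ' x hx]; exact (hΛ x hx).hasDerivAt
    exact (h1.add h2).mul h3
  constructor
  · intro x hx
    exact (Filter.EventuallyEq.differentiableAt_iff (hev x hx)).mpr
      ((hgd x hx).differentiableAt)
  · intro x hx
    have hdd : deriv (deriv Λ) x = deriv g x := (hev x hx).deriv_eq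
    rw [hdd, (hgd x hx).deriv]
    have hne := hΞne x hx
    have hq := hQ x hx
    have hss : s ^ 2 = -((Ξ x) ^ 2 * (E - v x) + (1 / 2) * Ξ x * deriv (deriv Ξ) x
        - (1 / 4) * (deriv Ξ x) ^ 2) := by rw [hq, hs]
    have key : ((deriv (deriv Ξ) x * (2 * Ξ x) - deriv Ξ x * (2 * deriv Ξ x)) / (2 * Ξ x) ^ 2
        + (0 * Ξ x - s * deriv Ξ x) / (Ξ x) ^ 2) * Λ x
        + (deriv Ξ x / (2 * Ξ x) + s / Ξ x) * ((deriv Ξ x / (2 * Ξ x) + s / Ξ x) * Λ x)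
        = (v x - E) * Λ x := by
      field_simp
      linear_combination (4 * Λ x) * hss
    rw [key]
    ring
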